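/- E[(C·e^{A + B·Z} − K)⁺] = C·e^{A + B²/2}·Φ(x_0 + B) − K·Φ(x_0), where x_0 = (A − ln(K/C))/B, (x)⁺ = max(x, 0), and the expectation is over Z. -/

import Mathlib

open MeasureTheory ProbabilityTheory

/-- The standard normal cumulative distribution function `Φ`. -/
noncomputable def stdNormalCDF (x : ℝ) : ℝ := (gaussianReal 0 1 (Set.Iic x)).toReal

section Aux

open Set Real

/-- `Φ x` equals the integral of the standard normal pdf over `Iic x`. -/
lemma stdNormalCDF_eq_integral (x : ℝ) :
    stdNormalCDF x = ∫ z in Set.Iic x, gaussianPDFReal 0 1 z := by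
  rw [stdNormalCDF, gaussianReal_apply_eq_integral 0 one_ne_zero,
    ENNReal.toReal_ofReal
      (setIntegral_nonneg measurableSet_Iic fun z _ => gaussianPDFReal_nonneg 0 1 z)]

lemma gaussianPDFReal_even (x : ℝ) : gaussianPDFReal 0 1 (-x) = gaussianPDFReal 0 1 x := by
  simp [gaussianPDFReal, neg_sq]

/-- Integral of the standard normal pdf over `Ici a` equals `Φ (-a)`. -/
lemma integral_Ici_gaussianPDFReal (a : ℝ) :
    ∫ z in Set.Ici a, gaussianPDFReal 0 1 z = stdNormalCDF (-a) := by
  rw [stdNormalCDF_eq_integral]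
  have h := integral_comp_neg_Iic (-a) (gaussianPDFReal 0 1)
  simp only [neg_neg] at h
  rw [integral_Ici_eq_integral_Ioi, ← h]
  exact setIntegral_congr_fun measurableSet_Iic fun z _ => (gaussianPDFReal_even z)

/-- Shift a set integral over `Ici`. -/
lemma integral_Ici_comp_sub (f : ℝ → ℝ) (c b : ℝ) :
    ∫ x in Set.Ici c, f (x - b) = ∫ x in Set.Ici (c - b), f x := by
  rw [← integral_indicator measurableSet_Ici, ← integral_indicator measurableSet_Ici]
  rw [← integral_sub_right_eq_self (fun x => (Set.Ici (c - b)).indicator f x) b]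
  congr 1
  ext x
  by_cases h : c ≤ x <;>
    simp [Set.indicator_apply, Set.mem_Ici, h, sub_le_sub_iff_right]

/-- Key pointwise identity: `e^{A+Bz} φ(z) = e^{A+B²/2} φ(z-B)`. -/
lemma exp_mul_gaussianPDFReal (A B z : ℝ) :
    Real.exp (A + B * z) * gaussianPDFReal 0 1 z
      = Real.exp (A + B ^ 2 / 2) * gaussianPDFReal 0 1 (z - B) := by
  simp only [gaussianPDFReal, NNReal.coe_one, mul_one, sub_zero]
  rw [mul_left_comm, ← Real.exp_add, mul_left_comm, ← Real.exp_add]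
  congr 1
  ring

end Aux

/-- For `Z` standard normal, `E[(C e^{A+BZ} − K)⁺] = C e^{A+B²/2} Φ(x₀+B) − K Φ(x₀)` with
`x₀ = (A − ln(K/C))/B`. -/
theorem lognormal_call_expectation
    (A B C K : ℝ) (hB : 0 < B) (hC : 0 < C) (hK : 0 < K) :
    ∫ z, max (C * Real.exp (A + B * z) - K) 0 ∂(gaussianReal 0 1)
      = C * Real.exp (A + B ^ 2 / 2) * stdNormalCDF ((A - Real.log (K / C)) / B + B)
        - K * stdNormalCDF ((A - Real.log (K / C)) / B) := by
  set φ : ℝ → ℝ := gaussianPDFReal 0 1 with hφ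
  set z₀ : ℝ := (Real.log (K / C) - A) / B with hz₀
  -- threshold characterization
  have hmem : ∀ z : ℝ, z₀ ≤ z ↔ K ≤ C * Real.exp (A + B * z) := by
    intro z
    rw [hz₀, div_le_iff₀ hB]
    constructor
    · intro h
      have h2 : Real.log (K / C) ≤ A + B * z := by nlinarith
      have := (Real.log_le_iff_le_exp (div_pos hK hC)).mp h2
      rw [div_le_iff₀ hC] at this
      linarith [this]
    · intro h
      have h1 : K / C ≤ Real.exp (A + B * z) := (div_le_iff₀ hC).mpr (by linarith [h])
      have h2 := (Real.log_le_iff_le_exp (div_pos hK hC)).mpr h1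
      nlinarith
  -- convert the gaussian integral to a Lebesgue integral with density
  have hconv : ∫ z, max (C * Real.exp (A + B * z) - K) 0 ∂(gaussianReal 0 1)
      = ∫ z, φ z * max (C * Real.exp (A + B * z) - K) 0 := by
    rw [gaussianReal_of_var_ne_zero 0 one_ne_zero,
      show gaussianPDF 0 1 = fun x => ((gaussianPDFReal 0 1 x).toNNReal : ENNReal) from rfl,
      integral_withDensity_eq_integral_smul
        ((measurable_gaussianPDFReal 0 1).real_toNNReal) _]
    congr 1
    ext z
    rw [NNReal.smul_def, Real.coe_toNNReal _ (gaussianPDFReal_nonneg 0 1 z), smul_eq_mul]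
  rw [hconv]
  -- restrict to Ici z₀
  have hres : ∫ z, φ z * max (C * Real.exp (A + B * z) - K) 0
      = ∫ z in Set.Ici z₀, φ z * (C * Real.exp (A + B * z) - K) := by
    rw [← setIntegral_eq_integral_of_forall_compl_eq_zero
      (s := Set.Ici z₀) (fun z hz => ?_)]
    · exact setIntegral_congr_fun measurableSet_Ici fun z hz => by
        rw [max_eq_left (by linarith [(hmem z).mp hz])]
    · have : ¬ K ≤ C * Real.exp (A + B * z) := fun h => hz ((hmem z).mpr h)
      rw [max_eq_right (by linarith), mul_zero]
  rw [hres]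
  -- integrability
  have hid : (fun z => φ z * (C * Real.exp (A + B * z)))
      = fun z => (C * Real.exp (A + B ^ 2 / 2)) * φ (z - B) := by
    funext z
    rw [mul_comm (φ z), mul_assoc, mul_comm (Real.exp _) (φ z), mul_comm (φ z),
      exp_mul_gaussianPDFReal A B z, mul_assoc]
  have h1 : Integrable (fun z => φ z * (C * Real.exp (A + B * z))) := by
    rw [hid]
    exact (((integrable_gaussianPDFReal 0 1).comp_sub_right B).const_mul _)
  have h2 : Integrable (fun z => φ z * K) := (integrable_gaussianPDFReal 0 1).mul_const K
  have hsplit : ∫ z in Set.Ici z₀, φ z * (C * Real.exp (A + B * z) - K)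
      = (∫ z in Set.Ici z₀, φ z * (C * Real.exp (A + B * z)))
        - ∫ z in Set.Ici z₀, φ z * K := by
    rw [← integral_sub h1.integrableOn h2.integrableOn]
    exact setIntegral_congr_fun measurableSet_Ici fun z _ => by ring
  rw [hsplit]
  -- first integral
  have hI1 : ∫ z in Set.Ici z₀, φ z * (C * Real.exp (A + B * z))
      = C * Real.exp (A + B ^ 2 / 2) * stdNormalCDF ((A - Real.log (K / C)) / B + B) := by
    calc ∫ z in Set.Ici z₀, φ z * (C * Real.exp (A + B * z))
        = ∫ z in Set.Ici z₀, (C * Real.exp (A + B ^ 2 / 2)) * φ (z - B) := by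
          rw [← hid]
      _ = (C * Real.exp (A + B ^ 2 / 2)) * ∫ z in Set.Ici z₀, φ (z - B) := by
          rw [integral_const_mul]
      _ = (C * Real.exp (A + B ^ 2 / 2)) * stdNormalCDF (-(z₀ - B)) := by
          rw [integral_Ici_comp_sub φ z₀ B, integral_Ici_gaussianPDFReal]
      _ = C * Real.exp (A + B ^ 2 / 2) * stdNormalCDF ((A - Real.log (K / C)) / B + B) := by
          congr 1
          rw [hz₀]
          field_simp
          ring
  -- second integral
  have hI2 : ∫ z in Set.Ici z₀, φ z * K
      = K * stdNormalCDF ((A - Real.log (K / C)) / B) := by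
    rw [integral_mul_const, integral_Ici_gaussianPDFReal, mul_comm]
    congr 2
    rw [hz₀]
    field_simp
    ring
  rw [hI1, hI2]
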